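/- Let f ∈ F_L and for δ ∈ (0, √(3/L)] let X_δ be the solution of the smoothed ODE Ẍ_δ + (3/max(δ,t))Ẋ_δ + ∇f(X_δ) = 0 with X_δ(0) = x₀, Ẋ_δ(0) = 0. Then for every t ∈ [0, √(6/L)]: ‖Ẋ_δ(t)‖ ≤ 5√(6/L)·‖∇f(x₀)‖ and ‖X_δ(t)‖ ≤ ‖x₀‖ + 30‖∇f(x₀)‖/L; in particular, the family {X_δ restricted to [0, √(6/L)] : 0 < δ ≤ √(3/L)} is uniformly bounded and (uniformly Lipschitz, hence) equicontinuous. -/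

import Mathlib

open Set Filter Topology intervalIntegral MeasureTheory

noncomputable section

abbrev E (n : ℕ) := EuclideanSpace ℝ (Fin n)

def MemFL (n : ℕ) (L : ℝ) (f : E n → ℝ) : Prop :=
  ConvexOn ℝ Set.univ f ∧ ContDiff ℝ 1 f ∧
    ∀ x y, ‖gradient f x - gradient f y‖ ≤ L * ‖x - y‖

/-- The solution `X` (with velocity `V = Ẋ`) of the smoothed ODE
`Ẍ + (3/max(δ,t))Ẋ + ∇f(X) = 0`, `X(0) = x₀`, `Ẋ(0) = 0`, on `[0,∞)`. -/
def SmoothedSol (n : ℕ) (f : E n → ℝ) (δ : ℝ) (x0 : E n) (X V : ℝ → E n) : Prop :=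
  X 0 = x0 ∧ V 0 = 0 ∧
  (∀ t ∈ Set.Ici (0:ℝ), HasDerivWithinAt X (V t) (Set.Ici 0) t) ∧
  (∀ t ∈ Set.Ici (0:ℝ),
    HasDerivWithinAt V (-(3 / max δ t) • V t - gradient f (X t)) (Set.Ici 0) t)

lemma grad_cont {n : ℕ} {f : E n → ℝ} (hf : ContDiff ℝ 1 f) : Continuous (gradient f) := by
  have h : Continuous fun x => fderiv ℝ f x := hf.continuous_fderiv one_ne_zero
  exact (InnerProductSpace.toDual ℝ (E n)).symm.continuous.comp h

lemma X_sub_eq {n : ℕ} {f : E n → ℝ} {δ : ℝ} {x0 : E n} {X V : ℝ → E n}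
    (hs : SmoothedSol n f δ x0 X V) {a b : ℝ} (ha : 0 ≤ a) (hab : a ≤ b) :
    X b - X a = ∫ s in a..b, V s := by
  obtain ⟨hX0, hV0, hX, hV⟩ := hs
  have hVc : ContinuousOn V (Ici 0) := fun u hu => (hV u hu).continuousWithinAt
  have hXc : ContinuousOn X (Ici 0) := fun u hu => (hX u hu).continuousWithinAt
  have hsub : Icc a b ⊆ Ici (0:ℝ) := fun x hx => le_trans ha hx.1
  have h := integral_eq_sub_of_hasDeriv_right_of_le hab (hXc.mono hsub)
    (fun x hx => ((hX x (le_trans ha hx.1.le)).mono (fun y hy => le_trans (le_trans ha hx.1.le) hy.le)))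
    ((hVc.mono (by rw [uIcc_of_le hab]; exact hsub)).intervalIntegrable)
  rw [h]

set_option maxHeartbeats 1600000 in
lemma key {n : ℕ} {L : ℝ} (hL : 0 < L) {f : E n → ℝ} (hf : MemFL n L f) {x0 : E n}
    {δ : ℝ} (hδ : 0 < δ) {X V : ℝ → E n} (hs : SmoothedSol n f δ x0 X V) :
    ∀ t : ℝ, 0 ≤ t → t ≤ Real.sqrt (6 / L) →
      ‖V t‖ ≤ 5 * Real.sqrt (6 / L) * ‖gradient f x0‖ ∧
      ‖X t - x0‖ ≤ 30 * ‖gradient f x0‖ / L := by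
  obtain ⟨hX0, hV0, hX, hV⟩ := hs
  set g0 := ‖gradient f x0‖ with hg0
  have hg0nn : 0 ≤ g0 := norm_nonneg _
  have hVc : ContinuousOn V (Ici 0) := fun u hu => (hV u hu).continuousWithinAt
  have hXc : ContinuousOn X (Ici 0) := fun u hu => (hX u hu).continuousWithinAt
  have hgc : Continuous (gradient f) := grad_cont hf.2.1
  have hmax : Continuous fun s : ℝ => max s 0 := continuous_id.max continuous_const
  have hmem : ∀ s : ℝ, max s 0 ∈ Ici (0:ℝ) := fun s => le_max_right s 0
  set W : ℝ → E n := fun s => V (max s 0) with hW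
  set G : ℝ → E n := fun s => gradient f (X (max s 0)) with hG
  have hWc : Continuous W := hVc.comp_continuous hmax hmem
  have hGc : Continuous G := hgc.comp (hXc.comp_continuous hmax hmem)
  have hWeq : ∀ s : ℝ, 0 ≤ s → W s = V s := fun s hs0 => by simp [hW, max_eq_left hs0]
  have hGeq : ∀ s : ℝ, 0 ≤ s → G s = gradient f (X s) := fun s hs0 => by
    simp [hG, max_eq_left hs0]
  -- integrating factor
  set k : ℝ → ℝ := fun s => 3 / max δ s with hk
  have hkc : Continuous k :=
    continuous_const.div (continuous_const.max continuous_id)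
      (fun s => (lt_of_lt_of_le hδ (le_max_left _ _)).ne')
  set μ : ℝ → ℝ := fun t => ∫ s in (0:ℝ)..t, k s with hμdef
  have hμ : ∀ t, HasDerivAt μ (k t) t := fun t =>
    integral_hasDerivAt_right (hkc.intervalIntegrable _ _)
      (hkc.stronglyMeasurableAtFilter _ _) hkc.continuousAt
  set m : ℝ → ℝ := fun t => Real.exp (μ t) with hmdef
  have hm : ∀ t, HasDerivAt m (k t * m t) t := fun t => by
    simpa [hmdef, mul_comm] using (hμ t).exp
  have hmpos : ∀ t, 0 < m t := fun t => Real.exp_pos _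
  have hmdiff : Differentiable ℝ m := fun t => (hm t).differentiableAt
  have hmc : Continuous m := hmdiff.continuous
  have hmmono : Monotone m := by
    apply monotone_of_deriv_nonneg hmdiff
    intro x
    rw [(hm x).deriv]
    have h1 : 0 < max δ x := lt_of_lt_of_le hδ (le_max_left _ _)
    have := (hmpos x).le
    positivity
  -- representation of m t • V t
  have hrep : ∀ t : ℝ, 0 ≤ t → m t • V t = ∫ s in (0:ℝ)..t, (-(m s) • G s) := by
    intro t ht
    have h1 : (∫ s in (0:ℝ)..t, (-(m s) • G s)) = m t • V t - m 0 • V 0 := by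
      apply integral_eq_sub_of_hasDeriv_right_of_le ht
      · exact (hmc.continuousOn.smul (hVc.mono (fun x hx => hx.1))).congr (fun x hx => rfl)
      · intro x hx
        have hx0 : (0:ℝ) ≤ x := hx.1.le
        have hd : HasDerivWithinAt V (-(3 / max δ x) • V x - gradient f (X x)) (Ioi x) x :=
          (hV x hx0).mono (fun y hy => le_trans hx0 hy.le)
        have hprod := ((hm x).hasDerivWithinAt).smul hd
        convert hprod using 1
        · rfl
        rw [hGeq x hx0]
        set c := m x
        set a := (3:ℝ) / max δ x
        show -c • gradient f (X x) = c • (-a • V x - gradient f (X x)) + (a * c) • V x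
        module
      · exact (hmc.neg.smul hGc).intervalIntegrable _ _
    rw [hV0, smul_zero, sub_zero] at h1
    exact h1.symm
  -- velocity bounded by integral of gradient norms
  have hVle : ∀ t : ℝ, 0 ≤ t → ‖V t‖ ≤ ∫ s in (0:ℝ)..t, ‖G s‖ := by
    intro t ht
    have h2 : ‖m t • V t‖ ≤ ∫ s in (0:ℝ)..t, ‖(-(m s)) • G s‖ := by
      rw [hrep t ht]
      exact intervalIntegral.norm_integral_le_integral_norm ht
    have heq : ∀ s : ℝ, ‖(-(m s)) • G s‖ = m s * ‖G s‖ := fun s => by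
      rw [norm_smul, Real.norm_eq_abs, abs_neg, abs_of_pos (hmpos s)]
    have h3 : (∫ s in (0:ℝ)..t, ‖(-(m s)) • G s‖) = ∫ s in (0:ℝ)..t, m s * ‖G s‖ := by
      simp only [heq]
    have h4 : (∫ s in (0:ℝ)..t, m s * ‖G s‖) ≤ ∫ s in (0:ℝ)..t, m t * ‖G s‖ := by
      apply integral_mono_on ht
        ((hmc.mul hGc.norm).intervalIntegrable _ _)
        ((continuous_const.mul hGc.norm).intervalIntegrable _ _)
      intro x hx
      exact mul_le_mul_of_nonneg_right (hmmono hx.2) (norm_nonneg _)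
    rw [intervalIntegral.integral_const_mul] at h4
    rw [norm_smul, Real.norm_eq_abs, abs_of_pos (hmpos t)] at h2
    rw [h3] at h2
    have := le_trans h2 h4
    exact le_of_mul_le_mul_left (by linarith) (hmpos t)
  -- displacement bounded by integral of velocity norms
  have hXle : ∀ t : ℝ, 0 ≤ t → ‖X t - x0‖ ≤ ∫ s in (0:ℝ)..t, ‖W s‖ := by
    intro t ht
    have h1 : X t - x0 = ∫ s in (0:ℝ)..t, V s := by
      rw [← hX0]
      exact X_sub_eq ⟨hX0, hV0, hX, hV⟩ le_rfl ht
    have h2 : (∫ s in (0:ℝ)..t, V s) = ∫ s in (0:ℝ)..t, W s := by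
      apply intervalIntegral.integral_congr
      intro x hx
      rw [uIcc_of_le ht] at hx
      exact (hWeq x hx.1).symm
    rw [h1, h2]
    exact intervalIntegral.norm_integral_le_integral_norm ht
  -- Grönwall setup
  set sL := Real.sqrt L with hsL
  have hsLpos : 0 < sL := Real.sqrt_pos.2 hL
  have hsLsq : sL * sL = L := Real.mul_self_sqrt hL.le
  set F : ℝ → ℝ := fun t => ∫ s in (0:ℝ)..t, ‖W s‖ with hFdef
  set GI : ℝ → ℝ := fun t => ∫ s in (0:ℝ)..t, ‖G s‖ with hGIdef
  set y : ℝ → ℝ := fun t => sL * F t + GI t with hydef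
  have hFd : ∀ t, HasDerivAt F ‖W t‖ t := fun t =>
    integral_hasDerivAt_right (hWc.norm.intervalIntegrable _ _)
      (hWc.norm.stronglyMeasurableAtFilter _ _) hWc.norm.continuousAt
  have hGId : ∀ t, HasDerivAt GI ‖G t‖ t := fun t =>
    integral_hasDerivAt_right (hGc.norm.intervalIntegrable _ _)
      (hGc.norm.stronglyMeasurableAtFilter _ _) hGc.norm.continuousAt
  have hyd : ∀ t, HasDerivAt y (sL * ‖W t‖ + ‖G t‖) t := fun t =>
    ((hFd t).const_mul sL).add (hGId t)
  have hFnn : ∀ t : ℝ, 0 ≤ t → 0 ≤ F t := fun t ht =>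
    intervalIntegral.integral_nonneg ht (fun x _ => norm_nonneg _)
  have hGInn : ∀ t : ℝ, 0 ≤ t → 0 ≤ GI t := fun t ht =>
    intervalIntegral.integral_nonneg ht (fun x _ => norm_nonneg _)
  have hynn : ∀ t : ℝ, 0 ≤ t → 0 ≤ y t := fun t ht =>
    add_nonneg (mul_nonneg hsLpos.le (hFnn t ht)) (hGInn t ht)
  have hy0 : y 0 = 0 := by simp [hydef, hFdef, hGIdef]
  have hGb : ∀ s : ℝ, 0 ≤ s → ‖G s‖ ≤ g0 + L * F s := by
    intro s hs0
    have h1 : ‖G s‖ ≤ ‖gradient f (X s) - gradient f x0‖ + g0 := by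
      rw [hGeq s hs0]
      calc ‖gradient f (X s)‖ = ‖(gradient f (X s) - gradient f x0) + gradient f x0‖ := by
            rw [sub_add_cancel]
        _ ≤ ‖gradient f (X s) - gradient f x0‖ + g0 := norm_add_le _ _
    have h2 : ‖gradient f (X s) - gradient f x0‖ ≤ L * ‖X s - x0‖ := hf.2.2 _ _
    have h3 : ‖X s - x0‖ ≤ F s := hXle s hs0
    have h4 : L * ‖X s - x0‖ ≤ L * F s := mul_le_mul_of_nonneg_left h3 hL.le
    linarith
  have hgron : ∀ T : ℝ, 0 ≤ T → y T ≤ g0 / sL * (Real.exp (sL * T) - 1) := by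
    intro T hT
    have hres := norm_le_gronwallBound_of_norm_deriv_right_le
      (f := y) (f' := fun x => sL * ‖W x‖ + ‖G x‖) (δ := 0) (K := sL) (ε := g0) (a := 0) (b := T)
      (fun x _ => (hyd x).continuousAt.continuousWithinAt)
      (fun x _ => (hyd x).hasDerivWithinAt)
      (by rw [hy0]; simp)
      ?_ T (by exact ⟨hT, le_rfl⟩)
    · rw [Real.norm_eq_abs, abs_of_nonneg (hynn T hT), sub_zero,
        gronwallBound_of_K_ne_0 hsLpos.ne'] at hres
      simpa using hres
    · intro x hx
      have hx0 : (0:ℝ) ≤ x := hx.1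
      have h1 : ‖W x‖ ≤ GI x := by rw [hWeq x hx0]; exact hVle x hx0
      have h2 : ‖G x‖ ≤ g0 + L * F x := hGb x hx0
      have hFx : 0 ≤ F x := hFnn x hx0
      rw [Real.norm_eq_abs, Real.norm_eq_abs,
        abs_of_nonneg (add_nonneg (mul_nonneg hsLpos.le (norm_nonneg _)) (norm_nonneg _)),
        abs_of_nonneg (hynn x hx0)]
      have h5 : sL * ‖W x‖ ≤ sL * GI x := mul_le_mul_of_nonneg_left h1 hsLpos.le
      show sL * ‖W x‖ + ‖G x‖ ≤ sL * (sL * F x + GI x) + g0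
      nlinarith [h5, h2, hsLsq, hFx, hsLpos.le]
  -- numerics
  have hsqrt6 : sL * Real.sqrt (6 / L) = Real.sqrt 6 := by
    rw [hsL, ← Real.sqrt_mul hL.le]
    congr 1
    field_simp
  have hsqrt6le : Real.sqrt 6 ≤ 5 / 2 := by
    rw [show (5/2:ℝ) = Real.sqrt ((5/2)^2) by
      rw [Real.sqrt_sq (by norm_num : (0:ℝ) ≤ 5/2)]]
    exact Real.sqrt_le_sqrt (by norm_num)
  have hexp13 : Real.exp (5/2 : ℝ) ≤ 13 := by
    have h5 : Real.exp (5:ℝ) < 169 := by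
      have he : Real.exp (5:ℝ) = Real.exp 1 ^ (5:ℕ) := by
        rw [show (5:ℝ) = ((5:ℕ):ℝ) * 1 by norm_num, Real.exp_nat_mul]
      rw [he]
      calc Real.exp 1 ^ (5:ℕ) < 2.7182818286 ^ (5:ℕ) :=
            pow_lt_pow_left₀ Real.exp_one_lt_d9 (Real.exp_pos 1).le (by norm_num)
        _ < 169 := by norm_num
    have hmul : Real.exp (5/2:ℝ) * Real.exp (5/2:ℝ) = Real.exp (5:ℝ) := by
      rw [← Real.exp_add]; norm_num
    nlinarith [Real.exp_pos (5/2:ℝ), hmul, h5]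
  have h12 : (12:ℝ) ≤ 5 * Real.sqrt 6 := by
    nlinarith [Real.sq_sqrt (show (0:ℝ) ≤ 6 by norm_num), Real.sqrt_nonneg 6]
  intro t ht hT
  have hEt : Real.exp (sL * t) - 1 ≤ 12 := by
    have h1 : sL * t ≤ Real.sqrt 6 := by
      calc sL * t ≤ sL * Real.sqrt (6 / L) := mul_le_mul_of_nonneg_left hT hsLpos.le
        _ = Real.sqrt 6 := hsqrt6
    have h2 := Real.exp_le_exp.2 (le_trans h1 hsqrt6le)
    linarith
  have hexpnn : (0:ℝ) ≤ Real.exp (sL * t) - 1 := by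
    have := Real.one_le_exp (mul_nonneg hsLpos.le ht)
    linarith
  have h3 : g0 / sL * (Real.exp (sL * t) - 1) ≤ g0 / sL * 12 :=
    mul_le_mul_of_nonneg_left hEt (div_nonneg hg0nn hsLpos.le)
  constructor
  · -- velocity bound
    have h1 : ‖V t‖ ≤ GI t := hVle t ht
    have h2 : GI t ≤ y t := by
      have := mul_nonneg hsLpos.le (hFnn t ht)
      show GI t ≤ sL * F t + GI t
      linarith
    have h4 : g0 / sL * 12 ≤ 5 * Real.sqrt (6 / L) * g0 := by
      rw [Real.sqrt_div (by norm_num : (0:ℝ) ≤ 6) L, ← hsL]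
      have hnum : g0 * 12 ≤ 5 * Real.sqrt 6 * g0 := by nlinarith [h12, hg0nn]
      calc g0 / sL * 12 = g0 * 12 / sL := by ring
        _ ≤ 5 * Real.sqrt 6 * g0 / sL := by gcongr
        _ = 5 * (Real.sqrt 6 / sL) * g0 := by ring
    calc ‖V t‖ ≤ GI t := h1
      _ ≤ y t := h2
      _ ≤ g0 / sL * (Real.exp (sL * t) - 1) := hgron t ht
      _ ≤ g0 / sL * 12 := h3
      _ ≤ 5 * Real.sqrt (6 / L) * g0 := h4
  · -- position bound
    have h1 : ‖X t - x0‖ ≤ F t := hXle t ht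
    have h2 : sL * F t ≤ y t := by
      have := hGInn t ht
      show sL * F t ≤ sL * F t + GI t
      linarith
    have h23 : sL * F t ≤ g0 / sL * 12 := le_trans h2 (le_trans (hgron t ht) h3)
    have h5 := mul_le_mul_of_nonneg_left h23 hsLpos.le
    have hrw : sL * (g0 / sL * 12) = g0 * 12 := by field_simp
    rw [← mul_assoc, hsLsq, hrw] at h5
    have h6 : F t ≤ 12 * g0 / L := by
      rw [le_div_iff₀ hL]
      linarith
    have h7 : 12 * g0 / L ≤ 30 * g0 / L := by gcongr <;> linarith
    linarith

/-- **Lemma (uniform boundedness and equicontinuity).** For `f ∈ F_L` and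
`δ ∈ (0, √(3/L)]`, the smoothed-ODE solutions satisfy, on `[0, √(6/L)]`, the uniform bounds
`‖Ẋ_δ(t)‖ ≤ 5√(6/L)‖∇f(x₀)‖` and `‖X_δ(t)‖ ≤ ‖x₀‖ + 30‖∇f(x₀)‖/L`; in particular the
family `{X_δ}` is uniformly bounded and equicontinuous on `[0, √(6/L)]`. -/
theorem smoothed_family_bounded_equicontinuous (n : ℕ) (L : ℝ) (hL : 0 < L)
    (f : E n → ℝ) (hf : MemFL n L f) (x0 : E n) :
    (∀ δ : ℝ, 0 < δ → δ ≤ Real.sqrt (3 / L) →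
      ∀ X V : ℝ → E n, SmoothedSol n f δ x0 X V →
        ∀ t : ℝ, 0 ≤ t → t ≤ Real.sqrt (6 / L) →
          ‖V t‖ ≤ 5 * Real.sqrt (6 / L) * ‖gradient f x0‖ ∧
          ‖X t‖ ≤ ‖x0‖ + 30 * ‖gradient f x0‖ / L) ∧
    ∀ ε > (0:ℝ), ∃ η > (0:ℝ), ∀ δ : ℝ, 0 < δ → δ ≤ Real.sqrt (3 / L) →
      ∀ X V : ℝ → E n, SmoothedSol n f δ x0 X V →
        ∀ s t : ℝ, s ∈ Set.Icc (0:ℝ) (Real.sqrt (6 / L)) →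
          t ∈ Set.Icc (0:ℝ) (Real.sqrt (6 / L)) → |s - t| < η →
            ‖X s - X t‖ ≤ ε := by
  constructor
  · intro δ hδ _ X V hs t ht hT
    obtain ⟨h1, h2⟩ := key hL hf hδ hs t ht hT
    refine ⟨h1, ?_⟩
    have h3 : ‖X t‖ ≤ ‖x0‖ + ‖X t - x0‖ := by
      calc ‖X t‖ = ‖x0 + (X t - x0)‖ := by rw [add_sub_cancel]
        _ ≤ ‖x0‖ + ‖X t - x0‖ := norm_add_le _ _
    linarith
  · intro ε hε
    set B := 5 * Real.sqrt (6 / L) * ‖gradient f x0‖ with hB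
    have hBnn : 0 ≤ B := by positivity
    refine ⟨ε / (B + 1), by positivity, ?_⟩
    intro δ hδ _ X V hs s t hsm htm hst
    have hVc : ContinuousOn V (Ici 0) := fun u hu => (hs.2.2.2 u hu).continuousWithinAt
    have main : ∀ a b : ℝ, a ∈ Icc (0:ℝ) (Real.sqrt (6 / L)) →
        b ∈ Icc (0:ℝ) (Real.sqrt (6 / L)) → a ≤ b → b - a < ε / (B + 1) →
        ‖X b - X a‖ ≤ ε := by
      intro a b ham hbm hab hlt
      have heq : X b - X a = ∫ u in a..b, V u := X_sub_eq hs ham.1 hab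
      have hsub : Icc a b ⊆ Ici (0:ℝ) := fun x hx => le_trans ham.1 hx.1
      have h1 : ‖X b - X a‖ ≤ ∫ u in a..b, ‖V u‖ := by
        rw [heq]; exact intervalIntegral.norm_integral_le_integral_norm hab
      have h2 : (∫ u in a..b, ‖V u‖) ≤ ∫ _u in a..b, B := by
        apply integral_mono_on hab
          (((hVc.mono (by rw [uIcc_of_le hab]; exact hsub)).norm).intervalIntegrable)
          intervalIntegrable_const
        intro x hx
        exact (key hL hf hδ hs x (le_trans ham.1 hx.1) (le_trans hx.2 hbm.2)).1
      have h3 : (∫ _u in a..b, B) = (b - a) * B := by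
        rw [intervalIntegral.integral_const, smul_eq_mul]
      have h4 : (b - a) * B ≤ ε / (B + 1) * B :=
        mul_le_mul_of_nonneg_right hlt.le hBnn
      have h5 : ε / (B + 1) * B ≤ ε / (B + 1) * (B + 1) :=
        mul_le_mul_of_nonneg_left (by linarith) (by positivity)
      have h6 : ε / (B + 1) * (B + 1) = ε := div_mul_cancel₀ ε (by positivity)
      linarith [h1, h2]
    rcases le_total s t with h | h
    · rw [norm_sub_rev]
      exact main s t hsm htm h (by rw [abs_sub_comm] at hst; linarith [abs_lt.1 hst])
    · exact main t s htm hsm h (by linarith [abs_lt.1 hst])
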